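/- Let X ⊂ ℝ^d be partitioned into K nonempty clusters C_1,…,C_K, each C_k assigned a center p_k such that ‖x−p_k‖ ≤ s for all x ∈ C_k. Then with weights w_k = 1/K, means p_k, and variances σ_k² = (1/(|C_k|d))∑_{x∈C_k}‖x−p_k‖² (assumed positive), the complete-data negative log-likelihood is at most (|X|d/2)·(ln(2πs²) + 1 + ln K). -/

import Mathlib

open Finset Real

/-- Upper bound on the optimal complete-data negative log-likelihood obtained
from any clustering with centers at distance at most `s` from their points. -/
theorem cmle_cost_upper_bound_from_centers
    {d K : ℕ} (hd : 2 ≤ d) (hK : 1 ≤ K)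
    (C : Fin K → Finset (EuclideanSpace ℝ (Fin d)))
    (hCne : ∀ k, (C k).Nonempty)
    (N : ℕ) (hN : N = ∑ k, (C k).card)
    (p : Fin K → EuclideanSpace ℝ (Fin d))
    (s : ℝ) (hs : 0 < s)
    (hdist : ∀ k, ∀ x ∈ C k, ‖x - p k‖ ≤ s)
    (σ2 : Fin K → ℝ)
    (hσ2 : ∀ k, σ2 k = (1 / (((C k).card : ℝ) * d)) * ∑ x ∈ C k, ‖x - p k‖ ^ 2)
    (hσ2pos : ∀ k, 0 < σ2 k) :
    ∑ k, ((((C k).card : ℝ) * d / 2) * Real.log (2 * π * σ2 k)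
            + (1 / (2 * σ2 k)) * ∑ x ∈ C k, ‖x - p k‖ ^ 2
            - ((C k).card : ℝ) * Real.log ((1 : ℝ) / K))
      ≤ ((N : ℝ) * d / 2) * (Real.log (2 * π * s ^ 2) + 1 + Real.log K) := by
  have hdpos : (0:ℝ) < d := by positivity
  have hd2 : (2:ℝ) ≤ (d:ℝ) := by exact_mod_cast hd
  have hKpos : (0:ℝ) < K := by positivity
  have hlogK : 0 ≤ Real.log K := Real.log_nonneg (by exact_mod_cast hK)
  have key : ∀ k, (((C k).card : ℝ) * d / 2) * Real.log (2 * π * σ2 k)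
            + (1 / (2 * σ2 k)) * ∑ x ∈ C k, ‖x - p k‖ ^ 2
            - ((C k).card : ℝ) * Real.log ((1 : ℝ) / K)
      ≤ (((C k).card : ℝ) * d / 2) * (Real.log (2 * π * s ^ 2) + 1 + Real.log K) := by
    intro k
    have hn : (0:ℝ) < (C k).card := by
      exact_mod_cast Finset.card_pos.mpr (hCne k)
    have hnd : (0:ℝ) < ((C k).card : ℝ) * d := by positivity
    have hS : ∑ x ∈ C k, ‖x - p k‖ ^ 2 = σ2 k * (((C k).card : ℝ) * d) := by
      rw [hσ2 k]; field_simp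
    -- second term equals n d / 2
    have h2 : (1 / (2 * σ2 k)) * ∑ x ∈ C k, ‖x - p k‖ ^ 2
        = ((C k).card : ℝ) * d / 2 := by
      rw [hS]; field_simp [(hσ2pos k).ne']
    -- σ2 k ≤ s^2
    have hσle : σ2 k ≤ s ^ 2 := by
      have hSle : ∑ x ∈ C k, ‖x - p k‖ ^ 2 ≤ ((C k).card : ℝ) * s ^ 2 := by
        calc ∑ x ∈ C k, ‖x - p k‖ ^ 2 ≤ ∑ x ∈ C k, s ^ 2 := by
              refine Finset.sum_le_sum fun x hx => ?_
              have := hdist k x hx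
              have hnn : (0:ℝ) ≤ ‖x - p k‖ := norm_nonneg _
              nlinarith
          _ = ((C k).card : ℝ) * s ^ 2 := by simp [mul_comm]
      have h1 : σ2 k ≤ (1 / (((C k).card : ℝ) * d)) * (((C k).card : ℝ) * s ^ 2) := by
        rw [hσ2 k]
        exact mul_le_mul_of_nonneg_left hSle (one_div_nonneg.mpr hnd.le)
      have h2' : (1 / (((C k).card : ℝ) * d)) * (((C k).card : ℝ) * s ^ 2) = s ^ 2 / d := by
        rw [div_mul_eq_mul_div, one_mul, mul_div_mul_left _ _ hn.ne']
      have h3' : s ^ 2 / (d:ℝ) ≤ s ^ 2 := by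
        rw [div_le_iff₀ hdpos]
        nlinarith [sq_nonneg s]
      linarith [h1, h2'.le, h2'.ge]
    have hlog : Real.log (2 * π * σ2 k) ≤ Real.log (2 * π * s ^ 2) := by
      apply Real.log_le_log (mul_pos (by positivity) (hσ2pos k))
      nlinarith [Real.pi_pos, hσ2pos k]
    -- the weight term
    have h3 : - (((C k).card : ℝ) * Real.log ((1 : ℝ) / K))
        ≤ (((C k).card : ℝ) * d / 2) * Real.log K := by
      rw [Real.log_div one_ne_zero hKpos.ne', Real.log_one]
      have : ((C k).card : ℝ) ≤ ((C k).card : ℝ) * d / 2 := by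
        nlinarith
      nlinarith [mul_le_mul_of_nonneg_right this hlogK]
    have h1 : (((C k).card : ℝ) * d / 2) * Real.log (2 * π * σ2 k)
        ≤ (((C k).card : ℝ) * d / 2) * Real.log (2 * π * s ^ 2) := by
      apply mul_le_mul_of_nonneg_left hlog (div_nonneg hnd.le two_pos.le)
    rw [h2]
    nlinarith [h1, h3]
  calc ∑ k, ((((C k).card : ℝ) * d / 2) * Real.log (2 * π * σ2 k)
            + (1 / (2 * σ2 k)) * ∑ x ∈ C k, ‖x - p k‖ ^ 2
            - ((C k).card : ℝ) * Real.log ((1 : ℝ) / K))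
      ≤ ∑ k, (((C k).card : ℝ) * d / 2) * (Real.log (2 * π * s ^ 2) + 1 + Real.log K) :=
        Finset.sum_le_sum fun k _ => key k
    _ = ((N : ℝ) * d / 2) * (Real.log (2 * π * s ^ 2) + 1 + Real.log K) := by
        rw [hN]
        push_cast
        rw [Finset.sum_mul, Finset.sum_div, Finset.sum_mul]
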